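/- arXiv:1111.2928 — 5 statements merged into one kernel-verified Lean document; each statement's English description precedes it below -/
import Mathlib

section
/- Every algebra automorphism Φ of B(H) maps the ideal of finite-rank operators into itself: if x ∈ B(H) has finite rank, then Φ(x) has finite rank. -/
set_option maxHeartbeats 800000

noncomputable section

variable {H : Type*} [NormedAddCommGroup H] [InnerProductSpace ℂ H] [CompleteSpace H]

/-- A bounded operator has finite rank if its range is finite-dimensional. -/
def FiniteRank (x : H →L[ℂ] H) : Prop :=
  FiniteDimensional ℂ (LinearMap.range (x : H →ₗ[ℂ] H))

local notation "⟪" a ", " b "⟫" => inner (𝕜 := ℂ) a b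

/-- The rank-one operator `z ↦ ⟪v, z⟫ • u`. -/
def rkOne (u v : H) : H →L[ℂ] H :=
  (ContinuousLinearMap.toSpanSingleton ℂ u).comp (innerSL ℂ v)

omit [CompleteSpace H] in
lemma rkOne_apply (u v z : H) : rkOne u v z = ⟪v, z⟫ • u := rfl

omit [CompleteSpace H] in
lemma rkOne_prop (u v : H) (a : H →L[ℂ] H) :
    rkOne u v * a * rkOne u v = ⟪v, a u⟫ • rkOne u v := by
  ext z
  simp only [ContinuousLinearMap.mul_apply, ContinuousLinearMap.smul_apply, rkOne_apply,
    map_smul, smul_smul, inner_smul_right]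
  ring_nf

omit [CompleteSpace H] in
lemma finiteRank_of_range_le_span (y : H →L[ℂ] H) (u : H)
    (h : ∀ z, y z ∈ Submodule.span ℂ {u}) : FiniteRank y := by
  have hle : LinearMap.range (y : H →ₗ[ℂ] H) ≤ Submodule.span ℂ {u} := by
    rintro w ⟨z, rfl⟩; exact h z
  exact Submodule.finiteDimensional_of_le hle

omit [CompleteSpace H] in
lemma finiteRank_of_prop (y : H →L[ℂ] H)
    (h : ∀ a : H →L[ℂ] H, ∃ c : ℂ, y * a * y = c • y) : FiniteRank y := by
  by_cases hy : y = 0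
  · subst hy
    exact finiteRank_of_range_le_span 0 0 (fun z => by simp)
  · obtain ⟨v, hv⟩ : ∃ v, y v ≠ 0 := by
      by_contra hc
      push_neg at hc
      exact hy (by ext z; simp [hc z])
    apply finiteRank_of_range_le_span y (y v)
    intro z
    have hin : (⟪y v, y v⟫ : ℂ) ≠ 0 := inner_self_ne_zero.mpr hv
    set a : H →L[ℂ] H := (⟪y v, y v⟫ : ℂ)⁻¹ • rkOne z (y v) with ha
    have hayv : a (y v) = z := by
      simp only [ha, ContinuousLinearMap.smul_apply, rkOne_apply, smul_smul]
      rw [inv_mul_cancel₀ hin, one_smul]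
    obtain ⟨c, hc⟩ := h a
    have hyz : y z = c • y v := by
      have := congrArg (fun f => f v) hc
      simpa [ContinuousLinearMap.mul_apply, hayv] using this
    rw [hyz]
    exact Submodule.smul_mem _ _ (Submodule.mem_span_singleton_self _)

theorem automorphism_maps_finiteRank_to_finiteRank
    (Φ : (H →L[ℂ] H) ≃ₐ[ℂ] (H →L[ℂ] H))
    (x : H →L[ℂ] H) (hx : FiniteRank x) : FiniteRank (Φ x) := by
  classical
  have : FiniteDimensional ℂ (LinearMap.range (x : H →ₗ[ℂ] H)) := hx
  set R := LinearMap.range (x : H →ₗ[ℂ] H) with hR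
  let b : OrthonormalBasis (Fin (Module.finrank ℂ R)) ℂ R := stdOrthonormalBasis ℂ R
  -- decompose x as a sum of rank one operators
  have hdecomp : x = ∑ i, rkOne (b i : H) (ContinuousLinearMap.adjoint x (b i : H)) := by
    ext z
    have hxz : x z ∈ R := ⟨z, rfl⟩
    have hexp : (⟨x z, hxz⟩ : R) = ∑ i, ⟪(b i : H), x z⟫ • b i := by
      conv_lhs => rw [← b.sum_repr ⟨x z, hxz⟩]
      congr 1
      ext i
      congr 1
      rw [b.repr_apply_apply]
      rfl
    have hco := congrArg (Subtype.val) hexp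
    simp only [Submodule.coe_sum, Submodule.coe_smul] at hco
    rw [ContinuousLinearMap.sum_apply]
    rw [hco]
    congr 1
    ext i
    rw [rkOne_apply, ContinuousLinearMap.adjoint_inner_left]
  have hsum : Φ x = ∑ i, Φ (rkOne (b i : H) (ContinuousLinearMap.adjoint x (b i : H))) := by
    conv_lhs => rw [hdecomp, map_sum]
  -- each term has finite rank
  have hterm : ∀ i, FiniteRank (Φ (rkOne (b i : H) (ContinuousLinearMap.adjoint x (b i : H)))) := by
    intro i
    apply finiteRank_of_prop
    intro a
    set u := (b i : H)
    set v := ContinuousLinearMap.adjoint x (b i : H)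
    refine ⟨⟪v, (Φ.symm a) u⟫, ?_⟩
    have heq : Φ (rkOne u v) * a * Φ (rkOne u v)
        = Φ (rkOne u v * Φ.symm a * rkOne u v) := by
      simp [map_mul]
    rw [heq, rkOne_prop, map_smul]
  -- finite sum of finite rank operators has finite rank
  rw [hsum]
  have key : ∀ (s : Finset (Fin (Module.finrank ℂ R))),
      FiniteRank (∑ i ∈ s, Φ (rkOne (b i : H) (ContinuousLinearMap.adjoint x (b i : H)))) := by
    intro s
    induction s using Finset.induction_on with
    | empty =>
      simp only [Finset.sum_empty]
      exact finiteRank_of_range_le_span 0 0 (fun z => by simp)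
    | @insert j s hj ih =>
      rw [Finset.sum_insert hj]
      set f := Φ (rkOne (b j : H) (ContinuousLinearMap.adjoint x (b j : H)))
      set g := ∑ i ∈ s, Φ (rkOne (b i : H) (ContinuousLinearMap.adjoint x (b i : H)))
      haveI hf : FiniteDimensional ℂ (LinearMap.range (f : H →ₗ[ℂ] H)) := hterm j
      haveI hg : FiniteDimensional ℂ (LinearMap.range (g : H →ₗ[ℂ] H)) := ih
      have hle : LinearMap.range ((f + g : H →L[ℂ] H) : H →ₗ[ℂ] H)
          ≤ LinearMap.range (f : H →ₗ[ℂ] H) ⊔ LinearMap.range (g : H →ₗ[ℂ] H) := by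
        rintro w ⟨z, rfl⟩
        exact Submodule.add_mem_sup ⟨z, rfl⟩ ⟨z, rfl⟩
      exact Submodule.finiteDimensional_of_le hle
  exact key Finset.univ
end
end

section
/- Let Δ : B(H) → B(H) be a 2-local derivation (for every pair x, y there is a derivation D_{x,y} of B(H) agreeing with Δ at x and y). If Δ vanishes on all finite-rank operators, then Δ is identically zero. -/
noncomputable section

variable {H : Type*} [NormedAddCommGroup H] [InnerProductSpace ℂ H] [CompleteSpace H]

/-- A (linear) derivation of `B(H)`: the Leibniz rule holds. -/
def IsDerivation (D : (H →L[ℂ] H) →ₗ[ℂ] (H →L[ℂ] H)) : Prop :=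
  ∀ x y : H →L[ℂ] H, D (x * y) = D x * y + x * D y

/-- A 2-local derivation: at every pair of points it agrees with some derivation. -/
def Is2LocalDerivation (Δ : (H →L[ℂ] H) → (H →L[ℂ] H)) : Prop :=
  ∀ x y : H →L[ℂ] H, ∃ D : (H →L[ℂ] H) →ₗ[ℂ] (H →L[ℂ] H),
    IsDerivation D ∧ Δ x = D x ∧ Δ y = D y

/-- The canonical trace, computed along a Hilbert basis. -/
def traceAlong {ι : Type*} (β : HilbertBasis ι ℂ H) (x : H →L[ℂ] H) : ℂ :=
  ∑' i, (inner ℂ (β i) (x (β i)) : ℂ)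

theorem twoLocalDerivation_eq_zero_of_vanishes_on_finiteRank
    (Δ : (H →L[ℂ] H) → (H →L[ℂ] H)) (hΔ : Is2LocalDerivation Δ)
    (h : ∀ x : H →L[ℂ] H, FiniteRank x → Δ x = 0) : ∀ x : H →L[ℂ] H, Δ x = 0 := by
  intro x
  have key : ∀ v : H, (inner ℂ ((Δ x) v) v : ℂ) = 0 := by
    intro v
    rcases eq_or_ne v 0 with rfl | hv
    · simp
    · set p : H →L[ℂ] H := (innerSL ℂ v).smulRight v with hp
      have hpw : ∀ w, p w = (inner ℂ v w : ℂ) • v := fun w => rfl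
      have hfr : FiniteRank p := by
        have hle : LinearMap.range (p : H →ₗ[ℂ] H) ≤ Submodule.span ℂ {v} := by
          rintro _ ⟨w, rfl⟩
          exact Submodule.smul_mem _ _ (Submodule.mem_span_singleton_self v)
        exact Submodule.finiteDimensional_of_le hle
      obtain ⟨D, hD, hx, hpD⟩ := hΔ x p
      have hDp : D p = 0 := by rw [← hpD, h p hfr]
      have hpxp : p * x * p = (inner ℂ v (x v) : ℂ) • p := by
        ext w
        simp only [ContinuousLinearMap.mul_apply, ContinuousLinearMap.smul_apply, hpw,
          map_smul, smul_smul]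
        rw [mul_comm]
      have h1 : D (p * x * p) = p * D x * p := by
        rw [hD (p * x) p, hD p x, hDp]
        simp
      have h2 : D (p * x * p) = 0 := by rw [hpxp, map_smul, hDp, smul_zero]
      have h3 : p * Δ x * p = 0 := by rw [hx, ← h1, h2]
      have h4 := congrArg (fun T : H →L[ℂ] H => T v) h3
      simp only [ContinuousLinearMap.mul_apply, ContinuousLinearMap.zero_apply, hpw,
        map_smul, inner_smul_right] at h4
      rw [hx] at h4 ⊢
      have hv2 : (inner ℂ v v : ℂ) ≠ 0 := by
        exact inner_self_ne_zero.mpr hv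
      rw [smul_smul, smul_eq_zero] at h4
      rcases h4 with h4 | h4
      · rcases mul_eq_zero.mp h4 with h5 | h5
        · exact absurd h5 hv2
        · rw [← inner_conj_symm, h5, map_zero]
      · exact absurd h4 hv
  have := (inner_map_self_eq_zero ((Δ x) : H →ₗ[ℂ] H)).mp (by intro w; exact key w)
  ext w
  have := LinearMap.congr_fun this w; simpa using this
end
end

section
/- Let Δ be a 2-local derivation on B(H). Then Δ is additive on the ideal of finite-rank operators: Δ(u + v) = Δ(u) + Δ(v) for all finite-rank operators u, v. -/
noncomputable section

variable {H : Type*} [NormedAddCommGroup H] [InnerProductSpace ℂ H] [CompleteSpace H]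

/-- Algebraic trace of a finite-rank endomorphism: trace of the induced
endomorphism of its range (junk value `0` if the range is infinite-dimensional). -/
def fTr (f : H →ₗ[ℂ] H) : ℂ :=
  LinearMap.trace ℂ (LinearMap.range f)
    ((f.codRestrict (LinearMap.range f) (fun h => LinearMap.mem_range_self f h)).comp
      (LinearMap.range f).subtype)

/-- Restriction of an endomorphism to a subspace containing its range. -/
def restr (f : H →ₗ[ℂ] H) (W : Submodule ℂ H) (hW : ∀ h, f h ∈ W) : W →ₗ[ℂ] W :=
  (f.domRestrict W).codRestrict W (fun x => hW x)

lemma fTr_eq_trace_restrict (f : H →ₗ[ℂ] H) (W : Submodule ℂ H) [FiniteDimensional ℂ W]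
    (hW : ∀ h, f h ∈ W) :
    fTr f = LinearMap.trace ℂ W (restr f W hW) := by
  set V := LinearMap.range f with hV
  have hVW : V ≤ W := by rintro _ ⟨y, rfl⟩; exact hW y
  haveI : FiniteDimensional ℂ V := Submodule.finiteDimensional_of_le hVW
  set φ : W →ₗ[ℂ] V :=
    (f.comp W.subtype).codRestrict V (fun w => LinearMap.mem_range_self f (w : H)) with hφ
  set ψ : V →ₗ[ℂ] W := Submodule.inclusion hVW with hψ
  have h1 : restr f W hW = ψ.comp φ := by
    ext x; rfl
  have h2 : (f.codRestrict V (fun h => LinearMap.mem_range_self f h)).comp V.subtype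
      = φ.comp ψ := by
    ext x; rfl
  rw [fTr, h1, h2, LinearMap.trace_comp_comm']

lemma fTr_add (f g : H →ₗ[ℂ] H) (hf : FiniteDimensional ℂ (LinearMap.range f))
    (hg : FiniteDimensional ℂ (LinearMap.range g)) :
    fTr (f + g) = fTr f + fTr g := by
  set W := LinearMap.range f ⊔ LinearMap.range g with hW
  haveI : FiniteDimensional ℂ W := Submodule.finiteDimensional_sup _ _
  have hfW : ∀ h, f h ∈ W := fun h =>
    Submodule.mem_sup_left (LinearMap.mem_range_self f h)
  have hgW : ∀ h, g h ∈ W := fun h =>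
    Submodule.mem_sup_right (LinearMap.mem_range_self g h)
  have hfgW : ∀ h, (f + g) h ∈ W := fun h => by
    simpa using add_mem (hfW h) (hgW h)
  rw [fTr_eq_trace_restrict f W hfW, fTr_eq_trace_restrict g W hgW,
    fTr_eq_trace_restrict (f + g) W hfgW]
  have : restr (f + g) W hfgW = restr f W hfW + restr g W hgW := by
    ext x; rfl
  rw [this, map_add]

lemma fTr_neg (f : H →ₗ[ℂ] H) (hf : FiniteDimensional ℂ (LinearMap.range f)) :
    fTr (-f) = -fTr f := by
  set W := LinearMap.range f with hW
  have hfW : ∀ h, f h ∈ W := fun h => LinearMap.mem_range_self f h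
  have hnW : ∀ h, (-f) h ∈ W := fun h => by simpa using neg_mem (hfW h)
  rw [fTr_eq_trace_restrict f W hfW, fTr_eq_trace_restrict (-f) W hnW]
  have : restr (-f) W hnW = -(restr f W hfW) := by
    ext x; rfl
  rw [this, map_neg]

lemma fTr_comp_comm (f g : H →ₗ[ℂ] H) (hf : FiniteDimensional ℂ (LinearMap.range f)) :
    fTr (f ∘ₗ g) = fTr (g ∘ₗ f) := by
  set V := LinearMap.range f with hVdef
  set W := V ⊔ V.map g with hWdef
  haveI : FiniteDimensional ℂ (V.map g) := Module.Finite.map V g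
  haveI : FiniteDimensional ℂ W := Submodule.finiteDimensional_sup _ _
  have hfg : ∀ h, (f ∘ₗ g) h ∈ V := fun h => LinearMap.mem_range_self f (g h)
  have hgf : ∀ h, (g ∘ₗ f) h ∈ W := fun h =>
    Submodule.mem_sup_right ⟨f h, LinearMap.mem_range_self f h, rfl⟩
  rw [fTr_eq_trace_restrict (f ∘ₗ g) V hfg, fTr_eq_trace_restrict (g ∘ₗ f) W hgf]
  set φ : W →ₗ[ℂ] V :=
    (f.comp W.subtype).codRestrict V (fun w => LinearMap.mem_range_self f (w : H)) with hφ
  set ψ : V →ₗ[ℂ] W :=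
    ((g.comp V.subtype).codRestrict W (fun v =>
      Submodule.mem_sup_right (Submodule.mem_map_of_mem v.2))) with hψ
  have h1 : restr (f ∘ₗ g) V hfg = φ.comp ψ := by ext x; rfl
  have h2 : restr (g ∘ₗ f) W hgf = ψ.comp φ := by ext x; rfl
  rw [h1, h2, LinearMap.trace_comp_comm']

lemma fTr_smulRight (φ : H →ₗ[ℂ] ℂ) (v : H) : fTr (φ.smulRight v) = φ v := by
  rcases eq_or_ne v 0 with rfl | hv
  · have : φ.smulRight (0 : H) = 0 := by ext x; simp
    rw [this, fTr_eq_trace_restrict 0 ⊥ (fun h => by simp), map_zero,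
      Subsingleton.elim (restr 0 ⊥ _) 0, map_zero]
  · set W : Submodule ℂ H := ℂ ∙ v with hWdef
    have hW : ∀ h, (φ.smulRight v) h ∈ W := fun h =>
      Submodule.smul_mem _ _ (Submodule.mem_span_singleton_self v)
    rw [fTr_eq_trace_restrict (φ.smulRight v) W hW]
    have : restr (φ.smulRight v) W hW = φ v • LinearMap.id := by
      ext ⟨x, hx⟩
      obtain ⟨t, rfl⟩ := Submodule.mem_span_singleton.mp hx
      simp [restr, smul_smul, mul_comm]
      show (φ (t • v)) • v = (t * φ v) • v
      rw [map_smul, smul_eq_mul]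
    rw [this, map_smul, LinearMap.trace_id, finrank_span_singleton hv]
    simp

/-- Every derivation of `B(H)` is implemented by a (possibly unbounded) linear map. -/
lemma isDerivation_inner (D : (H →L[ℂ] H) →ₗ[ℂ] (H →L[ℂ] H)) (hD : IsDerivation D)
    (ξ₀ : H) (hξ₀ : (inner ℂ ξ₀ ξ₀ : ℂ) = 1) :
    ∃ a : H →ₗ[ℂ] H, ∀ (x : H →L[ℂ] H) (h : H), D x h = a (x h) - x (a h) := by
  classical
  set θ : H → (H →L[ℂ] H) := fun h => (innerSL ℂ ξ₀).smulRight h with hθ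
  have hθadd : ∀ h h', θ (h + h') = θ h + θ h' := by
    intro h h'; ext k
    simp only [hθ, ContinuousLinearMap.smulRight_apply, ContinuousLinearMap.add_apply, smul_add]
  have hθsmul : ∀ (c : ℂ) (h : H), θ (c • h) = c • θ h := by
    intro c h; ext k
    simp only [hθ, ContinuousLinearMap.smulRight_apply, ContinuousLinearMap.coe_smul',
      Pi.smul_apply]
    rw [smul_comm]
  refine ⟨{ toFun := fun h => D (θ h) ξ₀
            map_add' := by
              intro h h'
              simp only [hθadd, map_add, ContinuousLinearMap.add_apply]
            map_smul' := by
              intro c h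
              simp only [hθsmul, map_smul, ContinuousLinearMap.coe_smul',
                Pi.smul_apply, RingHom.id_apply] }, ?_⟩
  intro x h
  have hc : x * θ h = θ (x h) := by
    ext k
    simp only [hθ, ContinuousLinearMap.mul_apply, ContinuousLinearMap.smulRight_apply,
      ContinuousLinearMap.map_smul]
  have h2 := congrArg (fun z => z ξ₀) (hD x (θ h))
  simp only [ContinuousLinearMap.add_apply, ContinuousLinearMap.mul_apply] at h2
  have hθξ : (θ h) ξ₀ = h := by
    simp only [hθ, ContinuousLinearMap.smulRight_apply, innerSL_apply_apply, hξ₀, one_smul]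
  rw [hc, hθξ] at h2
  show D x h = D (θ (x h)) ξ₀ - x (D (θ h) ξ₀)
  rw [h2]
  abel

lemma fTr_deriv (D : (H →L[ℂ] H) →ₗ[ℂ] (H →L[ℂ] H)) (hD : IsDerivation D)
    (a : H →ₗ[ℂ] H) (ha : ∀ (x : H →L[ℂ] H) (h : H), D x h = a (x h) - x (a h))
    (x w : H →L[ℂ] H) (hx : FiniteRank x) (hw : FiniteRank w) :
    fTr ((D x : H →ₗ[ℂ] H) ∘ₗ (w : H →ₗ[ℂ] H)) = -fTr ((x : H →ₗ[ℂ] H) ∘ₗ (D w : H →ₗ[ℂ] H)) := by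
  haveI : FiniteDimensional ℂ (LinearMap.range (x : H →ₗ[ℂ] H)) := hx
  haveI : FiniteDimensional ℂ (LinearMap.range (w : H →ₗ[ℂ] H)) := hw
  set r : H →ₗ[ℂ] H := (x : H →ₗ[ℂ] H) ∘ₗ (w : H →ₗ[ℂ] H) with hr
  have hrange_r : FiniteDimensional ℂ (LinearMap.range r) :=
    Submodule.finiteDimensional_of_le (S₂ := LinearMap.range (x : H →ₗ[ℂ] H)) (by
      rintro _ ⟨y, rfl⟩; exact LinearMap.mem_range_self _ _)
  have key : (D x : H →ₗ[ℂ] H) ∘ₗ (w : H →ₗ[ℂ] H)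
      + (x : H →ₗ[ℂ] H) ∘ₗ (D w : H →ₗ[ℂ] H) = a ∘ₗ r - r ∘ₗ a := by
    ext h
    have h1 := ha (x * w) h
    have h2 := congrArg (fun z => z h) (hD x w)
    simp only [ContinuousLinearMap.add_apply, ContinuousLinearMap.mul_apply] at h1 h2
    simp only [LinearMap.add_apply, LinearMap.sub_apply, LinearMap.comp_apply,
      ContinuousLinearMap.coe_coe, hr]
    rw [← h2, h1]
  -- finite-dimensionality of the various ranges
  have hDxw : FiniteDimensional ℂ (LinearMap.range ((D x : H →ₗ[ℂ] H) ∘ₗ (w : H →ₗ[ℂ] H))) := by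
    rw [LinearMap.range_comp]
    exact Module.Finite.map _ _
  have hxDw : FiniteDimensional ℂ (LinearMap.range ((x : H →ₗ[ℂ] H) ∘ₗ (D w : H →ₗ[ℂ] H))) :=
    Submodule.finiteDimensional_of_le (S₂ := LinearMap.range (x : H →ₗ[ℂ] H)) (by
      rintro _ ⟨y, rfl⟩; exact LinearMap.mem_range_self _ _)
  have har : FiniteDimensional ℂ (LinearMap.range (a ∘ₗ r)) := by
    rw [LinearMap.range_comp]
    exact Module.Finite.map _ _
  have hra : FiniteDimensional ℂ (LinearMap.range (r ∘ₗ a)) :=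
    Submodule.finiteDimensional_of_le (S₂ := LinearMap.range r) (by
      rintro _ ⟨y, rfl⟩; exact LinearMap.mem_range_self _ _)
  have hsum := fTr_add _ _ hDxw hxDw
  rw [key] at hsum
  have hsub : a ∘ₗ r - r ∘ₗ a = a ∘ₗ r + -(r ∘ₗ a) := by abel
  rw [hsub, fTr_add _ _ har (by rwa [LinearMap.range_neg]), fTr_neg _ hra,
    fTr_comp_comm r a hrange_r] at hsum
  linear_combination -hsum

theorem twoLocalDerivation_additive_on_finiteRank
    (Δ : (H →L[ℂ] H) → (H →L[ℂ] H)) (hΔ : Is2LocalDerivation Δ)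
    (u v : H →L[ℂ] H) (hu : FiniteRank u) (hv : FiniteRank v) :
    Δ (u + v) = Δ u + Δ v := by
  rcases subsingleton_or_nontrivial H with hH | hH
  · apply ContinuousLinearMap.ext
    intro h
    exact Subsingleton.elim _ _
  · -- a unit vector
    obtain ⟨z, hz⟩ := exists_ne (0 : H)
    set ξ₀ : H := (‖z‖ : ℂ)⁻¹ • z with hξ₀def
    have hz' : (‖z‖ : ℂ) ≠ 0 := by
      simpa using norm_ne_zero_iff.mpr hz
    have hξ₀ : (inner ℂ ξ₀ ξ₀ : ℂ) = 1 := by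
      rw [hξ₀def, inner_smul_left, inner_smul_right, inner_self_eq_norm_sq_to_K]
      simp only [map_inv₀, Complex.conj_ofReal]
      field_simp
      rfl
    haveI hfu : FiniteDimensional ℂ (LinearMap.range (u : H →ₗ[ℂ] H)) := hu
    haveI hfv : FiniteDimensional ℂ (LinearMap.range (v : H →ₗ[ℂ] H)) := hv
    apply ContinuousLinearMap.ext
    intro ξ
    apply ext_inner_left ℂ
    intro η
    set w : H →L[ℂ] H := (innerSL ℂ η).smulRight ξ with hwdef
    have hw : FiniteRank w := by
      apply Submodule.finiteDimensional_of_le (S₂ := ℂ ∙ ξ)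
      rintro _ ⟨y, rfl⟩
      exact Submodule.smul_mem _ _ (Submodule.mem_span_singleton_self ξ)
    have huv : FiniteRank (u + v) := by
      apply Submodule.finiteDimensional_of_le
        (S₂ := LinearMap.range (u : H →ₗ[ℂ] H) ⊔ LinearMap.range (v : H →ₗ[ℂ] H))
      rintro _ ⟨y, rfl⟩
      exact add_mem (Submodule.mem_sup_left (LinearMap.mem_range_self _ y))
        (Submodule.mem_sup_right (LinearMap.mem_range_self _ y))
    -- trace against w recovers matrix coefficients
    have hcoeff : ∀ z : H →L[ℂ] H,
        fTr ((z : H →ₗ[ℂ] H) ∘ₗ (w : H →ₗ[ℂ] H)) = (inner ℂ η (z ξ) : ℂ) := by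
      intro z
      have : (z : H →ₗ[ℂ] H) ∘ₗ (w : H →ₗ[ℂ] H)
          = ((innerSL ℂ η : H →L[ℂ] ℂ) : H →ₗ[ℂ] ℂ).smulRight (z ξ) := by
        ext h; simp [hwdef]
      rw [this, fTr_smulRight]
      rfl
    -- the three pair derivations
    have step : ∀ x : H →L[ℂ] H, FiniteRank x → Δ x = x → True := fun _ _ _ => trivial
    have main : ∀ x : H →L[ℂ] H, FiniteRank x →
        (inner ℂ η (Δ x ξ) : ℂ) = -fTr ((x : H →ₗ[ℂ] H) ∘ₗ ((Δ w : H →L[ℂ] H) : H →ₗ[ℂ] H)) := by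
      intro x hx
      obtain ⟨D, hDder, hDx, hDw⟩ := hΔ x w
      obtain ⟨a, ha⟩ := isDerivation_inner D hDder ξ₀ hξ₀
      rw [← hcoeff (Δ x), hDx, hDw, fTr_deriv D hDder a ha x w hx hw]
    have h1 := main (u + v) huv
    have h2 := main u hu
    have h3 := main v hv
    have hsplit : ((u + v : H →L[ℂ] H) : H →ₗ[ℂ] H) ∘ₗ ((Δ w : H →L[ℂ] H) : H →ₗ[ℂ] H)
        = (u : H →ₗ[ℂ] H) ∘ₗ ((Δ w : H →L[ℂ] H) : H →ₗ[ℂ] H)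
          + (v : H →ₗ[ℂ] H) ∘ₗ ((Δ w : H →L[ℂ] H) : H →ₗ[ℂ] H) := by
      ext h; simp
    have hfud : FiniteDimensional ℂ
        (LinearMap.range ((u : H →ₗ[ℂ] H) ∘ₗ ((Δ w : H →L[ℂ] H) : H →ₗ[ℂ] H))) :=
      Submodule.finiteDimensional_of_le (S₂ := LinearMap.range (u : H →ₗ[ℂ] H)) (by
        rintro _ ⟨y, rfl⟩; exact LinearMap.mem_range_self _ _)
    have hfvd : FiniteDimensional ℂ
        (LinearMap.range ((v : H →ₗ[ℂ] H) ∘ₗ ((Δ w : H →L[ℂ] H) : H →ₗ[ℂ] H))) :=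
      Submodule.finiteDimensional_of_le (S₂ := LinearMap.range (v : H →ₗ[ℂ] H)) (by
        rintro _ ⟨y, rfl⟩; exact LinearMap.mem_range_self _ _)
    rw [ContinuousLinearMap.add_apply, inner_add_right, h1, h2, h3, hsplit,
      fTr_add _ _ hfud hfvd]
    ring
end
end

section
/- Every linear Jordan derivation on a semiprime (associative) algebra is a derivation: if A is semiprime and d : A → A is linear with d(x²) = d(x)x + x d(x) for all x, then d(xy) = d(x)y + x d(y) for all x, y. -/
set_option maxHeartbeats 2000000 in
/-- Brešar's theorem: every linear Jordan derivation on a semiprime algebra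
over a field of characteristic ≠ 2 is a derivation. -/
theorem jordan_derivation_is_derivation_of_semiprime
    {F : Type*} {A : Type*} [Field F] [Ring A] [Algebra F A]
    (hchar : (2 : F) ≠ 0)
    (hsemiprime : ∀ a : A, (∀ x : A, a * x * a = 0) → a = 0)
    (d : A →ₗ[F] A)
    (hjordan : ∀ x : A, d (x * x) = d x * x + x * d x) :
    ∀ x y : A, d (x * y) = d x * y + x * d y := by
  have htf : ∀ m : A, m + m = 0 → m = 0 := by
    intro m hm
    have h2 : (2 : F) • m = 0 := by rw [two_smul]; exact hm
    have h3 := congrArg (fun z : A => (2:F)⁻¹ • z) h2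
    simpa [smul_smul, inv_mul_cancel₀ hchar] using h3
  have hflip : ∀ a b : A, (∀ w : A, a * w * b = 0) → ∀ w : A, b * w * a = 0 := by
    intro a b h w
    apply hsemiprime
    intro z
    have e : b * w * a * z * (b * w * a) = b * w * (a * z * b) * w * a := by noncomm_ring
    rw [e, h z]
    simp
  have S1 : ∀ u v : A, d (u*v + v*u) = d u * v + u * d v + d v * u + v * d u := by
    intro u v
    have e : u*v + v*u = (u+v)*(u+v) - u*u - v*v := by noncomm_ring
    rw [e, map_sub, map_sub, hjordan (u+v), hjordan u, hjordan v, map_add]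
    noncomm_ring
  have S2 : ∀ u v : A, d (u*v*u) = d u * (v*u) + u * d v * u + u*v* d u := by
    intro u v
    have e2 : u*v*u + u*v*u = (u*(u*v + v*u) + (u*v + v*u)*u) - (u*u*v + v*(u*u)) := by
      noncomm_ring
    have h := congrArg d e2
    rw [map_sub, S1 u (u*v + v*u), S1 (u*u) v, S1 u v, hjordan u, map_add] at h
    have h' : d (u*v*u) + d (u*v*u)
        = (d u * (v*u) + u * d v * u + u*v* d u) + (d u * (v*u) + u * d v * u + u*v* d u) := by
      rw [h]; noncomm_ring
    have h2 : (d (u*v*u) - (d u * (v*u) + u * d v * u + u*v* d u))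
        + (d (u*v*u) - (d u * (v*u) + u * d v * u + u*v* d u)) = 0 := by
      rw [sub_add_sub_comm, h', sub_self]
    exact sub_eq_zero.mp (htf _ h2)
  have S3 : ∀ u v w : A, d (u*v*w + w*v*u)
      = d u * (v*w) + u * d v * w + u*v* d w + d w * (v*u) + w * d v * u + w*v* d u := by
    intro u v w
    have e : u*v*w + w*v*u = (u+w)*v*(u+w) - u*v*u - w*v*w := by noncomm_ring
    rw [e, map_sub, map_sub, S2 (u+w) v, S2 u v, S2 w v, map_add]
    noncomm_ring
  have hyx : ∀ x y : A, d (y*x) = (d x * y + x * d y + d y * x + y * d x) - d (x*y) := by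
    intro x y
    have h := S1 x y
    rw [map_add] at h
    exact eq_sub_of_add_eq' h
  have S4 : ∀ x y : A, (d (x*y) - d x * y - x * d y) * (x*y - y*x) = 0 := by
    intro x y
    have h := S3 x y (x*y)
    have e : x*y*(x*y) + (x*y)*y*x = (x*y)*(x*y) + x*(y*y)*x := by noncomm_ring
    rw [e, map_add, hjordan (x*y), S2 x (y*y), hjordan y] at h
    have h0 := sub_eq_zero.mpr h
    rw [← h0]
    noncomm_ring
  have S5 : ∀ x y : A, (x*y - y*x) * (d (x*y) - d x * y - x * d y) = 0 := by
    intro x y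
    have h := S3 x y (y*x)
    have e : x*y*(y*x) + (y*x)*y*x = x*(y*y)*x + (y*x)*(y*x) := by noncomm_ring
    rw [e, map_add, S2 x (y*y), hjordan y, hjordan (y*x), hyx x y] at h
    have h0 := sub_eq_zero.mpr h
    rw [← h0]
    noncomm_ring
  have anti : ∀ a b : A, (∀ w : A, a * w * b + b * w * a = 0) → ∀ w : A, a * w * b = 0 := by
    intro a b h w
    apply hsemiprime
    intro y
    have hneg : ∀ m : A, a * m * b = -(b * m * a) := fun m => eq_neg_of_add_eq_zero_left (h m)
    have hba : b * w * a = -(a * w * b) := by rw [hneg w, neg_neg]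
    have h1 : a * w * b * y * (a * w * b) = -(b * w * b * y * (a * w * a)) := by
      calc a * w * b * y * (a * w * b) = a * (w * b * y * a * w) * b := by noncomm_ring
        _ = -(b * (w * b * y * a * w) * a) := hneg _
        _ = -(b * w * b * y * (a * w * a)) := by noncomm_ring
    have h2 : a * w * b * y * (a * w * b) = b * w * b * y * (a * w * a) := by
      have e1 : a * (w * b * y) * b * (w * a) = -(b * (w * b * y) * a) * (w * a) := by
        rw [hneg (w * b * y)]
      calc a * w * b * y * (a * w * b)
          = -(a * w * b * y * (b * w * a)) := by rw [hba]; noncomm_ring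
        _ = -(a * (w * b * y) * b * (w * a)) := by noncomm_ring
        _ = -(-(b * (w * b * y) * a) * (w * a)) := by rw [e1]
        _ = b * w * b * y * (a * w * a) := by noncomm_ring
    have h3 : a * w * b * y * (a * w * b) + a * w * b * y * (a * w * b) = 0 := by
      nth_rewrite 2 [h2]
      rw [h1]
      simp
    exact htf _ h3
  have S6 : ∀ x y w : A, (d (x*y) - d x * y - x * d y) * w * (x*y - y*x)
      + (x*y - y*x) * w * (d (x*y) - d x * y - x * d y) = 0 := by
    intro x y w
    have h := S3 (x*y) w (y*x)
    have e : (x*y)*w*(y*x) + (y*x)*w*(x*y) = x*(y*w*y)*x + y*(x*w*x)*y := by noncomm_ring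
    rw [e, map_add, S2 x (y*w*y), S2 y (x*w*x), S2 y w, S2 x w, hyx x y] at h
    have h0 := sub_eq_zero.mpr h
    rw [← h0]
    noncomm_ring
  -- Step 8: B(x,y) w [x,y] = 0 and reverse
  have S8a : ∀ x y w : A, (d (x*y) - d x * y - x * d y) * w * (x*y - y*x) = 0 := by
    intro x y
    exact anti _ _ (fun w => S6 x y w)
  have S8b : ∀ x y w : A, (x*y - y*x) * w * (d (x*y) - d x * y - x * d y) = 0 := by
    intro x y
    exact hflip _ _ (fun w => S8a x y w)
  -- Step 9: B(x,y) w [u,y] = 0 and reverse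
  have S9a : ∀ x y u w : A, (d (x*y) - d x * y - x * d y) * w * (u*y - y*u) = 0 := by
    intro x y u w
    have expand : (d ((x+u)*y) - d (x+u) * y - (x+u) * d y) * w * ((x+u)*y - y*(x+u))
        = (d (x*y) - d x * y - x * d y) * w * (u*y - y*u)
          + (d (u*y) - d u * y - u * d y) * w * (x*y - y*x)
          + (d (x*y) - d x * y - x * d y) * w * (x*y - y*x)
          + (d (u*y) - d u * y - u * d y) * w * (u*y - y*u) := by
      rw [add_mul x u y, map_add, map_add]
      noncomm_ring
    have h9 := S8a (x+u) y w
    rw [expand, S8a x y w, S8a u y w, add_zero, add_zero] at h9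
    have hneg := eq_neg_of_add_eq_zero_left h9
    apply hsemiprime
    intro z
    nth_rewrite 2 [hneg]
    have e : (d (x*y) - d x * y - x * d y) * w * (u*y - y*u) * z
          * -((d (u*y) - d u * y - u * d y) * w * (x*y - y*x))
        = -((d (x*y) - d x * y - x * d y) * w
            * ((u*y - y*u) * z * (d (u*y) - d u * y - u * d y)) * w * (x*y - y*x)) := by
      noncomm_ring
    rw [e, S8b u y z]
    simp
  have S9b : ∀ x y u w : A, (u*y - y*u) * w * (d (x*y) - d x * y - x * d y) = 0 := by
    intro x y u
    exact hflip _ _ (fun w => S9a x y u w)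
  -- Step 10: B(x,y) w [u,v] = 0 and reverse
  have S10a : ∀ x y u v w : A, (d (x*y) - d x * y - x * d y) * w * (u*v - v*u) = 0 := by
    intro x y u v w
    have expand : (d (x*(y+v)) - d x * (y+v) - x * d (y+v)) * w * (u*(y+v) - (y+v)*u)
        = (d (x*y) - d x * y - x * d y) * w * (u*v - v*u)
          + (d (x*v) - d x * v - x * d v) * w * (u*y - y*u)
          + (d (x*y) - d x * y - x * d y) * w * (u*y - y*u)
          + (d (x*v) - d x * v - x * d v) * w * (u*v - v*u) := by
      rw [mul_add x y v, map_add, map_add]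
      noncomm_ring
    have h9 := S9a x (y+v) u w
    rw [expand, S9a x y u w, S9a x v u w, add_zero, add_zero] at h9
    have hneg := eq_neg_of_add_eq_zero_left h9
    apply hsemiprime
    intro z
    nth_rewrite 2 [hneg]
    have e : (d (x*y) - d x * y - x * d y) * w * (u*v - v*u) * z
          * -((d (x*v) - d x * v - x * d v) * w * (u*y - y*u))
        = -((d (x*y) - d x * y - x * d y) * w
            * ((u*v - v*u) * z * (d (x*v) - d x * v - x * d v)) * w * (u*y - y*u)) := by
      noncomm_ring
    rw [e, S9b x v u z]
    simp
  have S10b : ∀ x y u v w : A, (u*v - v*u) * w * (d (x*y) - d x * y - x * d y) = 0 := by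
    intro x y u v
    exact hflip _ _ (fun w => S10a x y u v w)
  -- Step 11: B(x,y) is central
  have S11 : ∀ x y t : A, (d (x*y) - d x * y - x * d y) * t = t * (d (x*y) - d x * y - x * d y) := by
    intro x y t
    have h := hsemiprime ((d (x*y) - d x * y - x * d y) * t - t * (d (x*y) - d x * y - x * d y)) ?_
    · exact sub_eq_zero.mp h
    intro z
    have h1 := S10a x y (d (x*y) - d x * y - x * d y) t (t*z)
    have h2 := S10a x y (d (x*y) - d x * y - x * d y) t z
    calc ((d (x*y) - d x * y - x * d y) * t - t * (d (x*y) - d x * y - x * d y)) * z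
          * ((d (x*y) - d x * y - x * d y) * t - t * (d (x*y) - d x * y - x * d y))
        = (d (x*y) - d x * y - x * d y) * (t*z)
            * ((d (x*y) - d x * y - x * d y) * t - t * (d (x*y) - d x * y - x * d y))
          - t * ((d (x*y) - d x * y - x * d y) * z
            * ((d (x*y) - d x * y - x * d y) * t - t * (d (x*y) - d x * y - x * d y))) := by
          noncomm_ring
      _ = 0 := by rw [h1, h2]; simp
  -- Step 12: B(x,y) annihilates commutators
  have S12a : ∀ x y u v : A, (d (x*y) - d x * y - x * d y) * (u*v - v*u) = 0 := by
    intro x y u v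
    have h := S10a x y u v 1
    rwa [mul_one] at h
  have S12b : ∀ x y u v : A, (u*v - v*u) * (d (x*y) - d x * y - x * d y) = 0 := by
    intro x y u v
    have h := S10b x y u v 1
    rwa [mul_one] at h
  -- Endgame
  intro x y
  have hbc : (d (x*y) - d x * y - x * d y) * (x*y - y*x) = 0 := S12a x y x y
  have hcb : (x*y - y*x) * (d (x*y) - d x * y - x * d y) = 0 := S12b x y x y
  have hzero : (d (x*y) - d x * y - x * d y) * (x*y - y*x) + (x*y - y*x) * (d (x*y) - d x * y - x * d y) = 0 := by rw [hbc, hcb, add_zero]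
  have h1 : d (d (x*y) - d x * y - x * d y) * (x*y - y*x) + (d (x*y) - d x * y - x * d y) * d (x*y - y*x) + d (x*y - y*x) * (d (x*y) - d x * y - x * d y) + (x*y - y*x) * d (d (x*y) - d x * y - x * d y) = 0 := by
    have hs := S1 (d (x*y) - d x * y - x * d y) (x*y - y*x)
    rw [hzero, map_zero] at hs
    exact hs.symm
  have e1 : (d (x*y) - d x * y - x * d y) * d (d (x*y) - d x * y - x * d y) = d (d (x*y) - d x * y - x * d y) * (d (x*y) - d x * y - x * d y) := S11 x y (d (d (x*y) - d x * y - x * d y))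
  have e2 : (d (x*y) - d x * y - x * d y) * d (x*y - y*x) = d (x*y - y*x) * (d (x*y) - d x * y - x * d y) := S11 x y (d (x*y - y*x))
  have t1 : (d (x*y) - d x * y - x * d y) * (d (d (x*y) - d x * y - x * d y) * (x*y - y*x)) = 0 := by
    calc (d (x*y) - d x * y - x * d y) * (d (d (x*y) - d x * y - x * d y) * (x*y - y*x)) = ((d (x*y) - d x * y - x * d y) * d (d (x*y) - d x * y - x * d y)) * (x*y - y*x) := by noncomm_ring
      _ = (d (d (x*y) - d x * y - x * d y) * (d (x*y) - d x * y - x * d y)) * (x*y - y*x) := by rw [e1]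
      _ = d (d (x*y) - d x * y - x * d y) * ((d (x*y) - d x * y - x * d y) * (x*y - y*x)) := by noncomm_ring
      _ = 0 := by rw [hbc, mul_zero]
  have t2 : (d (x*y) - d x * y - x * d y) * (d (x*y - y*x) * (d (x*y) - d x * y - x * d y)) = (d (x*y) - d x * y - x * d y) * ((d (x*y) - d x * y - x * d y) * d (x*y - y*x)) := by rw [← e2]
  have t3 : (d (x*y) - d x * y - x * d y) * ((x*y - y*x) * d (d (x*y) - d x * y - x * d y)) = 0 := by
    calc (d (x*y) - d x * y - x * d y) * ((x*y - y*x) * d (d (x*y) - d x * y - x * d y)) = ((d (x*y) - d x * y - x * d y) * (x*y - y*x)) * d (d (x*y) - d x * y - x * d y) := by noncomm_ring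
      _ = 0 := by rw [hbc, zero_mul]
  have h3 : (d (x*y) - d x * y - x * d y) * (d (x*y) - d x * y - x * d y) * d (x*y - y*x) + (d (x*y) - d x * y - x * d y) * (d (x*y) - d x * y - x * d y) * d (x*y - y*x) = 0 := by
    have hm : (d (x*y) - d x * y - x * d y) * (d (d (x*y) - d x * y - x * d y) * (x*y - y*x) + (d (x*y) - d x * y - x * d y) * d (x*y - y*x) + d (x*y - y*x) * (d (x*y) - d x * y - x * d y) + (x*y - y*x) * d (d (x*y) - d x * y - x * d y)) = 0 := by
      rw [h1, mul_zero]
    calc (d (x*y) - d x * y - x * d y) * (d (x*y) - d x * y - x * d y) * d (x*y - y*x) + (d (x*y) - d x * y - x * d y) * (d (x*y) - d x * y - x * d y) * d (x*y - y*x)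
        = (d (x*y) - d x * y - x * d y) * (d (d (x*y) - d x * y - x * d y) * (x*y - y*x) + (d (x*y) - d x * y - x * d y) * d (x*y - y*x) + d (x*y - y*x) * (d (x*y) - d x * y - x * d y) + (x*y - y*x) * d (d (x*y) - d x * y - x * d y))
          - (d (x*y) - d x * y - x * d y) * (d (d (x*y) - d x * y - x * d y) * (x*y - y*x)) - (d (x*y) - d x * y - x * d y) * ((x*y - y*x) * d (d (x*y) - d x * y - x * d y))
          + ((d (x*y) - d x * y - x * d y) * ((d (x*y) - d x * y - x * d y) * d (x*y - y*x)) - (d (x*y) - d x * y - x * d y) * (d (x*y - y*x) * (d (x*y) - d x * y - x * d y))) := by noncomm_ring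
      _ = 0 - 0 - 0 + ((d (x*y) - d x * y - x * d y) * ((d (x*y) - d x * y - x * d y) * d (x*y - y*x)) - (d (x*y) - d x * y - x * d y) * ((d (x*y) - d x * y - x * d y) * d (x*y - y*x))) := by rw [hm, t1, t3, t2]
      _ = 0 := by simp
  have h3' : (d (x*y) - d x * y - x * d y) * (d (x*y) - d x * y - x * d y) * d (x*y - y*x) = 0 := htf _ h3
  have hdc : d (x*y - y*x) = (d (x*y) - d x * y - x * d y) + (d (x*y) - d x * y - x * d y) + (d x * y - y * d x + (x * d y - d y * x)) := by
    rw [map_sub, hyx x y]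
    noncomm_ring
  have hK1 : (d (x*y) - d x * y - x * d y) * (d x * y - y * d x) = 0 := S12a x y (d x) y
  have hK2 : (d (x*y) - d x * y - x * d y) * (x * d y - d y * x) = 0 := S12a x y x (d y)
  have h5 : (d (x*y) - d x * y - x * d y) * (d (x*y) - d x * y - x * d y) * (d (x*y) - d x * y - x * d y) + (d (x*y) - d x * y - x * d y) * (d (x*y) - d x * y - x * d y) * (d (x*y) - d x * y - x * d y) = 0 := by
    have e : (d (x*y) - d x * y - x * d y) * (d (x*y) - d x * y - x * d y) * (d (x*y) - d x * y - x * d y) + (d (x*y) - d x * y - x * d y) * (d (x*y) - d x * y - x * d y) * (d (x*y) - d x * y - x * d y)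
        = (d (x*y) - d x * y - x * d y) * (d (x*y) - d x * y - x * d y) * ((d (x*y) - d x * y - x * d y) + (d (x*y) - d x * y - x * d y) + (d x * y - y * d x + (x * d y - d y * x)))
          - (d (x*y) - d x * y - x * d y) * ((d (x*y) - d x * y - x * d y) * (d x * y - y * d x)) - (d (x*y) - d x * y - x * d y) * ((d (x*y) - d x * y - x * d y) * (x * d y - d y * x)) := by
      noncomm_ring
    rw [e, ← hdc, h3', hK1, hK2]
    simp
  have h6 : (d (x*y) - d x * y - x * d y) * (d (x*y) - d x * y - x * d y) * (d (x*y) - d x * y - x * d y) = 0 := htf _ h5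
  have h7 : (d (x*y) - d x * y - x * d y) * (d (x*y) - d x * y - x * d y) = 0 := by
    apply hsemiprime
    intro z
    calc (d (x*y) - d x * y - x * d y) * (d (x*y) - d x * y - x * d y) * z * ((d (x*y) - d x * y - x * d y) * (d (x*y) - d x * y - x * d y)) = (d (x*y) - d x * y - x * d y) * ((d (x*y) - d x * y - x * d y) * z) * ((d (x*y) - d x * y - x * d y) * (d (x*y) - d x * y - x * d y)) := by noncomm_ring
      _ = (d (x*y) - d x * y - x * d y) * (z * (d (x*y) - d x * y - x * d y)) * ((d (x*y) - d x * y - x * d y) * (d (x*y) - d x * y - x * d y)) := by rw [S11 x y z]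
      _ = (d (x*y) - d x * y - x * d y) * z * ((d (x*y) - d x * y - x * d y) * (d (x*y) - d x * y - x * d y) * (d (x*y) - d x * y - x * d y)) := by noncomm_ring
      _ = (d (x*y) - d x * y - x * d y) * z * 0 := by rw [h6]
      _ = 0 := by rw [mul_zero]
  have h8 : (d (x*y) - d x * y - x * d y) = 0 := by
    apply hsemiprime
    intro z
    have e : (d (x*y) - d x * y - x * d y) * z * (d (x*y) - d x * y - x * d y) = z * ((d (x*y) - d x * y - x * d y) * (d (x*y) - d x * y - x * d y)) := by
      rw [S11 x y z]
      noncomm_ring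
    rw [e, h7, mul_zero]
  rw [sub_sub] at h8
  exact sub_eq_zero.mp h8
end

section
/- Let H be an arbitrary (not necessarily separable) complex Hilbert space. Every 2-local derivation Δ : B(H) → B(H) is a derivation; moreover it is inner, i.e. there exists a ∈ B(H) with Δ(x) = a x − x a for all x ∈ B(H). -/
noncomputable section

variable {H : Type*} [NormedAddCommGroup H] [InnerProductSpace ℂ H] [CompleteSpace H]

open scoped ComplexInnerProductSpace

/-- The rank-one operator `v ↦ ⟪ζ, v⟫ • η`. -/
def rk (η ζ : H) : H →L[ℂ] H := (innerSL ℂ ζ).smulRight η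

lemma rk_apply (η ζ v : H) : rk η ζ v = ⟪ζ, v⟫ • η := rfl

lemma mul_rk (x : H →L[ℂ] H) (η ζ : H) : x * rk η ζ = rk (x η) ζ := by
  ext v
  simp [rk_apply, ContinuousLinearMap.mul_apply, map_smul]

lemma rk_add (η η' ζ : H) : rk (η + η') ζ = rk η ζ + rk η' ζ := by
  ext v
  simp [rk_apply, smul_add]

lemma rk_smul (c : ℂ) (η ζ : H) : rk (c • η) ζ = c • rk η ζ := by
  ext v
  simp only [rk_apply, ContinuousLinearMap.smul_apply]
  rw [smul_comm]

/-- A linear map on a Hilbert space all of whose "rows" are continuous is continuous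
(closed graph theorem). -/
lemma continuous_of_rows (A : H →ₗ[ℂ] H)
    (h : ∀ ζ : H, ∃ g : H →L[ℂ] ℂ, ∀ v, g v = ⟪ζ, A v⟫) : Continuous A := by
  choose g hg using h
  apply A.continuous_of_isClosed_graph
  have hset : (A.graph : Set (H × H)) = ⋂ ζ : H, {p : H × H | g ζ p.1 = ⟪ζ, p.2⟫} := by
    ext p
    simp only [Set.mem_iInter, SetLike.mem_coe, LinearMap.mem_graph_iff, Set.mem_setOf_eq]
    constructor
    · intro hp ζ
      rw [hg ζ p.1, hp]
    · intro hp
      refine (ext_inner_left ℂ fun ζ => ?_).symm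
      rw [← hg ζ p.1, hp ζ]
  rw [hset]
  exact isClosed_iInter fun ζ =>
    isClosed_eq ((g ζ).continuous.comp continuous_fst)
      (Continuous.inner continuous_const continuous_snd)

/-- Every derivation of `B(H)` is inner (for nontrivial `H`). -/
lemma derivation_inner (ξ : H) (hξ : ⟪ξ, ξ⟫ = 1)
    (D : (H →L[ℂ] H) →ₗ[ℂ] (H →L[ℂ] H)) (hD : IsDerivation D) :
    ∃ a : H →L[ℂ] H, ∀ x, D x = a * x - x * a := by
  set A : H →ₗ[ℂ] H :=
    { toFun := fun w => D (rk w ξ) ξ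
      map_add' := fun w w' => by
        show D (rk (w + w') ξ) ξ = D (rk w ξ) ξ + D (rk w' ξ) ξ
        rw [rk_add, map_add]
        simp [ContinuousLinearMap.add_apply]
      map_smul' := fun c w => by
        show D (rk (c • w) ξ) ξ = c • D (rk w ξ) ξ
        rw [rk_smul, map_smul]
        simp [ContinuousLinearMap.smul_apply] } with hA
  have hAw : ∀ w : H, A w = D (rk w ξ) ξ := fun w => rfl
  have key : ∀ (x : H →L[ℂ] H) (v : H), A (x v) = D x v + x (A v) := by
    intro x v
    have h1 : rk (x v) ξ = x * rk v ξ := (mul_rk x v ξ).symm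
    have h2 := hD x (rk v ξ)
    have h3 : A (x v) = D (x * rk v ξ) ξ := by rw [hAw, h1]
    rw [h3, h2]
    have h4 : rk v ξ ξ = v := by rw [rk_apply, hξ, one_smul]
    simp [ContinuousLinearMap.add_apply, ContinuousLinearMap.mul_apply, h4, hAw]
  have rows : ∀ ζ : H, ∃ g : H →L[ℂ] ℂ, ∀ v, g v = ⟪ζ, A v⟫ := by
    intro ζ
    refine ⟨⟪ξ, A ξ⟫ • innerSL ℂ ζ - (innerSL ℂ ξ).comp (D (rk ξ ζ)), fun v => ?_⟩
    have h := key (rk ξ ζ) v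
    have h1 : rk ξ ζ v = ⟪ζ, v⟫ • ξ := rfl
    have h2 : rk ξ ζ (A v) = ⟪ζ, A v⟫ • ξ := rfl
    rw [h1, map_smul] at h
    -- h : ⟪ζ,v⟫ • A ξ = D (rk ξ ζ) v + ⟪ζ, A v⟫ • ξ
    rw [h2] at h
    have h3 := congrArg (fun u => ⟪ξ, u⟫) h
    simp only [inner_add_right, inner_smul_right, hξ, mul_one] at h3
    -- h3 : ⟪ζ,v⟫ * ⟪ξ, A ξ⟫ = ⟪ξ, D (rk ξ ζ) v⟫ + ⟪ζ, A v⟫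
    simp only [ContinuousLinearMap.sub_apply, ContinuousLinearMap.smul_apply,
      ContinuousLinearMap.comp_apply, innerSL_apply_apply, smul_eq_mul]
    linear_combination h3
  have cont := continuous_of_rows A rows
  refine ⟨⟨A, cont⟩, fun x => ?_⟩
  ext v
  have h := key x v
  simp only [ContinuousLinearMap.sub_apply, ContinuousLinearMap.mul_apply]
  have : (⟨A, cont⟩ : H →L[ℂ] H) (x v) = A (x v) := rfl
  rw [this]
  have : x ((⟨A, cont⟩ : H →L[ℂ] H) v) = x (A v) := rfl
  rw [this, h]
  abel

/-- If a bounded operator commutes with the rank one `rk η ζ` (pointwise form), then it acts as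
a scalar on `η` and on the row `⟪ζ, ·⟫`. -/
lemma comm_rk {B : H →L[ℂ] H} {η ζ : H} (hη : η ≠ 0) (hζ : ζ ≠ 0)
    (hB : ∀ v, ⟪ζ, v⟫ • B η = ⟪ζ, B v⟫ • η) :
    ∃ c : ℂ, B η = c • η ∧ ∀ v, ⟪ζ, B v⟫ = c * ⟪ζ, v⟫ := by
  have hzz : ⟪ζ, ζ⟫ ≠ 0 := inner_self_ne_zero.mpr hζ
  set v₀ := (⟪ζ, ζ⟫)⁻¹ • ζ with hv₀def
  have hv₀ : ⟪ζ, v₀⟫ = 1 := by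
    rw [hv₀def, inner_smul_right, inv_mul_cancel₀ hzz]
  refine ⟨⟪ζ, B v₀⟫, ?_, ?_⟩
  · have h := hB v₀
    rwa [hv₀, one_smul] at h
  · intro v
    have h1 := hB v
    have h2 := hB v₀
    rw [hv₀, one_smul] at h2
    rw [h2, smul_smul] at h1
    have h3 : (⟪ζ, v⟫ * ⟪ζ, B v₀⟫ - ⟪ζ, B v⟫) • η = 0 := by
      rw [sub_smul, h1, sub_self]
    rcases smul_eq_zero.mp h3 with h | h
    · linear_combination -h
    · exact absurd h hη

theorem twoLocalDerivation_is_inner_derivation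
    (Δ : (H →L[ℂ] H) → (H →L[ℂ] H)) (hΔ : Is2LocalDerivation Δ) :
    ∃ a : H →L[ℂ] H, ∀ x : H →L[ℂ] H, Δ x = a * x - x * a := by
  rcases subsingleton_or_nontrivial H with hH | hH
  · refine ⟨0, fun x => ?_⟩
    ext v
    exact Subsingleton.elim _ _
  · obtain ⟨ξ₀, hξ₀⟩ := exists_ne (0 : H)
    set ξ : H := ‖ξ₀‖⁻¹ • ξ₀ with hξdef
    have hξn : ‖ξ‖ = 1 := norm_smul_inv_norm hξ₀
    have hξ : ⟪ξ, ξ⟫ = 1 := by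
      rw [inner_self_eq_norm_sq_to_K, hξn]
      norm_num
    -- Step A: at each pair, Δ agrees with an inner derivation.
    have stepA : ∀ x y : H →L[ℂ] H, ∃ a : H →L[ℂ] H,
        Δ x = a * x - x * a ∧ Δ y = a * y - y * a := by
      intro x y
      obtain ⟨D, hD, h1, h2⟩ := hΔ x y
      obtain ⟨a, ha⟩ := derivation_inner ξ hξ D hD
      exact ⟨a, by rw [h1, ha], by rw [h2, ha]⟩
    -- difference of two implementers at the same rank one commutes with it
    have commOf : ∀ {η ζ : H} (a b : H →L[ℂ] H),
        Δ (rk η ζ) = a * rk η ζ - rk η ζ * a →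
        Δ (rk η ζ) = b * rk η ζ - rk η ζ * b →
        ∀ v, ⟪ζ, v⟫ • (a - b) η = ⟪ζ, (a - b) v⟫ • η := by
      intro η ζ a b ha hb v
      have h := ha.symm.trans hb
      have h2 := congrArg (fun z : H →L[ℂ] H => z v) h
      simp only [ContinuousLinearMap.sub_apply, ContinuousLinearMap.mul_apply, rk_apply,
        map_smul] at h2
      -- h2 : ⟪ζ,v⟫ • a η - ⟪ζ, a v⟫ • η = ⟪ζ,v⟫ • b η - ⟪ζ, b v⟫ • η
      simp only [ContinuousLinearMap.sub_apply, inner_sub_right, smul_sub, sub_smul]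
      rw [sub_eq_sub_iff_sub_eq_sub]
      exact h2
    -- Step B: the value of Δ at x against ⟪ζ, · η⟫ is computed by ANY implementer at rk η ζ.
    have stepB : ∀ (x : H →L[ℂ] H) (η ζ : H) (a : H →L[ℂ] H),
        Δ (rk η ζ) = a * rk η ζ - rk η ζ * a →
        ⟪ζ, Δ x η⟫ = ⟪ζ, a (x η)⟫ - ⟪ζ, x (a η)⟫ := by
      intro x η ζ a ha
      by_cases hη : η = 0
      · subst hη
        simp
      by_cases hζ : ζ = 0
      · subst hζ
        simp
      obtain ⟨a₀, ha₀x, ha₀r⟩ := stepA x (rk η ζ)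
      obtain ⟨c, hc1, hc2⟩ := comm_rk hη hζ (commOf a a₀ ha ha₀r)
      have e0 : ⟪ζ, Δ x η⟫ = ⟪ζ, a₀ (x η)⟫ - ⟪ζ, x (a₀ η)⟫ := by
        rw [ha₀x]
        simp [ContinuousLinearMap.sub_apply, ContinuousLinearMap.mul_apply, inner_sub_right]
      have e1 : ⟪ζ, a (x η)⟫ - ⟪ζ, a₀ (x η)⟫ = c * ⟪ζ, x η⟫ := by
        have := hc2 (x η)
        simp only [ContinuousLinearMap.sub_apply, inner_sub_right] at this
        linear_combination this
      have e2 : x (a η) - x (a₀ η) = c • x η := by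
        have h := hc1
        simp only [ContinuousLinearMap.sub_apply] at h
        rw [← map_sub, ← map_smul]
        congr 1
      have e2' : ⟪ζ, x (a η)⟫ - ⟪ζ, x (a₀ η)⟫ = c * ⟪ζ, x η⟫ := by
        rw [← inner_sub_right, e2, inner_smul_right]
      linear_combination e0 - e1 + e2'
    -- Additivity of Δ.
    have hadd : ∀ x y : H →L[ℂ] H, Δ (x + y) = Δ x + Δ y := by
      intro x y
      ext v
      refine ext_inner_left ℂ fun ζ => ?_
      obtain ⟨a, har, _⟩ := stepA (rk v ζ) (rk v ζ)
      have h1 := stepB (x + y) v ζ a har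
      have h2 := stepB x v ζ a har
      have h3 := stepB y v ζ a har
      simp only [ContinuousLinearMap.add_apply, map_add, inner_add_right] at h1 ⊢
      linear_combination h1 - h2 - h3
    -- Homogeneity of Δ.
    have hsmul : ∀ (c : ℂ) (x : H →L[ℂ] H), Δ (c • x) = c • Δ x := by
      intro c x
      obtain ⟨D, _, h1, h2⟩ := hΔ x (c • x)
      rw [h2, map_smul, ← h1]
    -- The global spatial implementation, defined on rank ones.
    set A : H →ₗ[ℂ] H :=
      { toFun := fun w => Δ (rk w ξ) ξ
        map_add' := fun w w' => by
          show Δ (rk (w + w') ξ) ξ = Δ (rk w ξ) ξ + Δ (rk w' ξ) ξ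
          rw [rk_add, hadd]
          simp [ContinuousLinearMap.add_apply]
        map_smul' := fun c w => by
          show Δ (rk (c • w) ξ) ξ = c • Δ (rk w ξ) ξ
          rw [rk_smul, hsmul]
          simp [ContinuousLinearMap.smul_apply] } with hA
    have hAw : ∀ w : H, A w = Δ (rk w ξ) ξ := fun w => rfl
    -- Lemma W: computing A from any implementer.
    have lemW : ∀ (w : H) (a : H →L[ℂ] H), Δ (rk w ξ) = a * rk w ξ - rk w ξ * a →
        A w = a w - ⟪ξ, a ξ⟫ • w := by
      intro w a ha
      rw [hAw, ha]
      simp only [ContinuousLinearMap.sub_apply, ContinuousLinearMap.mul_apply, rk_apply, hξ,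
        one_smul, map_smul]
    -- Step D1: the key identity when ⟪ζ, η⟫ ≠ 0.
    have D1 : ∀ (x : H →L[ℂ] H) (η ζ : H), ⟪ζ, η⟫ ≠ 0 →
        ⟪ζ, Δ x η⟫ = ⟪ζ, A (x η)⟫ - ⟪ζ, x (A η)⟫ := by
      intro x η ζ hζη
      have hη : η ≠ 0 := by rintro rfl; simp at hζη
      have hζ : ζ ≠ 0 := by rintro rfl; simp at hζη
      have hzz : ⟪ζ, ζ⟫ ≠ 0 := inner_self_ne_zero.mpr hζ
      obtain ⟨a, hax, har⟩ := stepA x (rk η ζ)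
      -- the row identity on the kernel of ⟪ζ, ·⟫
      have row0 : ∀ w : H, ⟪ζ, w⟫ = 0 → ⟪ζ, A w⟫ = ⟪ζ, a w⟫ := by
        intro w hw
        obtain ⟨aw, hw1, hw2⟩ := stepA (rk w ξ) (rk η ζ)
        obtain ⟨c, _, hc2⟩ := comm_rk hη hζ (commOf a aw har hw2)
        have h1 : ⟪ζ, A w⟫ = ⟪ζ, aw w⟫ := by
          rw [lemW w aw hw1, inner_sub_right, inner_smul_right, hw]
          ring
        have h2 := hc2 w
        simp only [ContinuousLinearMap.sub_apply, inner_sub_right] at h2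
        rw [hw, mul_zero] at h2
        linear_combination h1 - h2
      -- the full row identity
      set μ : ℂ := (⟪ζ, a ζ⟫ - ⟪ζ, A ζ⟫) / ⟪ζ, ζ⟫ with hμdef
      have row : ∀ w : H, ⟪ζ, A w⟫ = ⟪ζ, a w⟫ - μ * ⟪ζ, w⟫ := by
        intro w
        have hw' : ⟪ζ, w - (⟪ζ, w⟫ / ⟪ζ, ζ⟫) • ζ⟫ = 0 := by
          rw [inner_sub_right, inner_smul_right]
          field_simp
          ring
        have h0 := row0 _ hw'
        simp only [map_sub, map_smul, inner_sub_right, inner_smul_right] at h0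
        rw [hμdef]
        field_simp at h0 ⊢
        linear_combination h0
      -- the column identity
      obtain ⟨aη, he1, he2⟩ := stepA (rk η ξ) (rk η ζ)
      obtain ⟨c, hc1, _⟩ := comm_rk hη hζ (commOf a aη har he2)
      set ν : ℂ := c + ⟪ξ, aη ξ⟫ with hνdef
      have col : A η = a η - ν • η := by
        rw [lemW η aη he1]
        simp only [ContinuousLinearMap.sub_apply] at hc1
        rw [hνdef]
        linear_combination (norm := module) -hc1
      -- μ = ν
      have hμν : μ = ν := by
        have h1 := row η
        have h2 : ⟪ζ, A η⟫ = ⟪ζ, a η⟫ - ν * ⟪ζ, η⟫ := by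
          rw [col, inner_sub_right, inner_smul_right]
        have h3 : μ * ⟪ζ, η⟫ = ν * ⟪ζ, η⟫ := by linear_combination h1 - h2
        exact mul_right_cancel₀ hζη h3
      -- conclude
      have hΔx : ⟪ζ, Δ x η⟫ = ⟪ζ, a (x η)⟫ - ⟪ζ, x (a η)⟫ := by
        rw [hax]
        simp [ContinuousLinearMap.sub_apply, ContinuousLinearMap.mul_apply, inner_sub_right]
      have hxA : ⟪ζ, x (A η)⟫ = ⟪ζ, x (a η)⟫ - ν * ⟪ζ, x η⟫ := by
        rw [col, map_sub, map_smul, inner_sub_right, inner_smul_right]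
      rw [hΔx, row (x η), hxA, hμν]
      ring
    -- Step D2: the identity for all ζ.
    have D2 : ∀ (x : H →L[ℂ] H) (η ζ : H),
        ⟪ζ, Δ x η⟫ = ⟪ζ, A (x η)⟫ - ⟪ζ, x (A η)⟫ := by
      intro x η ζ
      by_cases hη : η = 0
      · subst hη
        simp
      by_cases h1 : ⟪ζ, η⟫ = 0
      · have hηη : ⟪η, η⟫ ≠ 0 := inner_self_ne_zero.mpr hη
        have e1 := D1 x η (ζ + η) (by rw [inner_add_left, h1, zero_add]; exact hηη)
        have e2 := D1 x η η hηη
        simp only [inner_add_left] at e1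
        linear_combination e1 - e2
      · exact D1 x η ζ h1
    -- the pointwise spatial identity
    have key : ∀ (x : H →L[ℂ] H) (v : H), Δ x v = A (x v) - x (A v) := by
      intro x v
      refine ext_inner_left ℂ fun ζ => ?_
      rw [inner_sub_right]
      exact D2 x v ζ
    -- rows of A are continuous
    have rows : ∀ ζ : H, ∃ g : H →L[ℂ] ℂ, ∀ v, g v = ⟪ζ, A v⟫ := by
      intro ζ
      refine ⟨⟪ξ, A ξ⟫ • innerSL ℂ ζ - (innerSL ℂ ξ).comp (Δ (rk ξ ζ)), fun v => ?_⟩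
      have h := key (rk ξ ζ) v
      have h1 : rk ξ ζ v = ⟪ζ, v⟫ • ξ := rfl
      have h2 : rk ξ ζ (A v) = ⟪ζ, A v⟫ • ξ := rfl
      rw [h1, map_smul, h2] at h
      have h3 := congrArg (fun u => ⟪ξ, u⟫) h
      simp only [inner_sub_right, inner_smul_right, hξ, mul_one] at h3
      simp only [ContinuousLinearMap.sub_apply, ContinuousLinearMap.smul_apply,
        ContinuousLinearMap.comp_apply, innerSL_apply_apply, smul_eq_mul]
      linear_combination -h3
    have cont := continuous_of_rows A rows
    refine ⟨⟨A, cont⟩, fun x => ?_⟩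
    ext v
    have h := key x v
    simp only [ContinuousLinearMap.sub_apply, ContinuousLinearMap.mul_apply]
    exact h
end
end
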